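/- arXiv:2106.12749 — 3 statements merged into one kernel-verified Lean document; each statement's English description precedes it below -/
import Mathlib

section
/- Let p ≥ 1, let Σ_w ∈ ℝ^{p×p} be positive definite, let m, m' ∈ ℝ^p with m ≠ m', and let ε > 0. Let ν_m and ν_{m'} be the Gaussian measures N(m, Σ_w) and N(m', Σ_w) on ℝ^p, and set Δ := |m − m'|_{Σ_w^{−1}} > 0. Then for every Borel set S ⊆ ℝ^p, ν_m(S) ≤ e^ε · ν_{m'}(S) + Q(ε/Δ − Δ/2). (Core Gaussian mechanism bound used in the proofs of Theorems 1 and 2.) -/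
open MeasureTheory Matrix Real

/-- Gaussian density on `Fin n → ℝ` with mean `m` and covariance `S`. -/
noncomputable def gaussianPdf {n : ℕ} (m : Fin n → ℝ) (S : Matrix (Fin n) (Fin n) ℝ)
    (x : Fin n → ℝ) : ℝ :=
  (2 * π) ^ (-(n : ℝ) / 2) * S.det ^ (-(1 : ℝ) / 2) *
    Real.exp (-(1 / 2) * ((x - m) ⬝ᵥ (S⁻¹ *ᵥ (x - m))))

/-- Gaussian measure `N(m, S)` on `Fin n → ℝ`. -/
noncomputable def gaussianMeasure {n : ℕ} (m : Fin n → ℝ) (S : Matrix (Fin n) (Fin n) ℝ) :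
    Measure (Fin n → ℝ) :=
  volume.withDensity fun x => ENNReal.ofReal (gaussianPdf m S x)

/-- The Q-function `Q(c) = (1/√(2π)) ∫_c^∞ e^{-v²/2} dv`. -/
noncomputable def Qfun (c : ℝ) : ℝ :=
  (1 / Real.sqrt (2 * π)) * ∫ v in Set.Ioi c, Real.exp (-(v ^ 2) / 2)

/-- Inverse of the Q-function. -/
noncomputable def Qinv (δ : ℝ) : ℝ := Function.invFun Qfun δ

/-- `R(ε, δ) = (Q⁻¹(δ) + √((Q⁻¹(δ))² + 2ε)) / (2ε)`. -/
noncomputable def Rfun (ε δ : ℝ) : ℝ :=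
  (Qinv δ + Real.sqrt ((Qinv δ) ^ 2 + 2 * ε)) / (2 * ε)

/-- Weighted norm `|x|_A = (xᵀ A x)^{1/2}`. -/
noncomputable def wnorm {n : ℕ} (A : Matrix (Fin n) (Fin n) ℝ) (x : Fin n → ℝ) : ℝ :=
  Real.sqrt (x ⬝ᵥ (A *ᵥ x))

/-- Largest (real) eigenvalue of a matrix: supremum of its real spectrum. -/
noncomputable def lambdaMax {n : ℕ} (M : Matrix (Fin n) (Fin n) ℝ) : ℝ :=
  sSup (spectrum ℝ M)

/-- Smallest (real) eigenvalue of a matrix: infimum of its real spectrum. -/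
noncomputable def lambdaMin {n : ℕ} (M : Matrix (Fin n) (Fin n) ℝ) : ℝ :=
  sInf (spectrum ℝ M)

/-- χ² probability density with `k` degrees of freedom. -/
noncomputable def chi2pdf (k : ℕ) (z : ℝ) : ℝ :=
  z ^ ((k : ℝ) / 2 - 1) * Real.exp (-z / 2) / (2 ^ ((k : ℝ) / 2) * Real.Gamma ((k : ℝ) / 2))

/- ### Auxiliary lemmas -/

lemma aux_mulVec_dot {p : ℕ} (A : Matrix (Fin p) (Fin p) ℝ) (y x : Fin p → ℝ) :
    (A *ᵥ y) ⬝ᵥ x = y ⬝ᵥ (Aᵀ *ᵥ x) := by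
  rw [dotProduct_comm, Matrix.dotProduct_mulVec, ← Matrix.mulVec_transpose,
    dotProduct_comm]

lemma aux_dot_symm {p : ℕ} (M : Matrix (Fin p) (Fin p) ℝ) (hM : Mᵀ = M) (v w : Fin p → ℝ) :
    v ⬝ᵥ (M *ᵥ w) = w ⬝ᵥ (M *ᵥ v) := by
  rw [Matrix.dotProduct_mulVec, ← Matrix.mulVec_transpose, hM, dotProduct_comm]

lemma aux_pdf_continuous {p : ℕ} (m : Fin p → ℝ) (S : Matrix (Fin p) (Fin p) ℝ) :
    Continuous (gaussianPdf m S) := by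
  unfold gaussianPdf Matrix.mulVec
  simp only [dotProduct]
  fun_prop

lemma aux_dot_continuous {p : ℕ} (u m : Fin p → ℝ) :
    Continuous (fun x : Fin p → ℝ => u ⬝ᵥ (x - m)) := by
  unfold dotProduct
  fun_prop

open scoped MatrixOrder in
lemma aux_exists_A {p : ℕ} (hp : 0 < p) (Sw : Matrix (Fin p) (Fin p) ℝ) (hSw : Sw.PosDef)
    (d : Fin p → ℝ) (hd : d ≠ 0) :
    ∃ A : Matrix (Fin p) (Fin p) ℝ,
      A.det ≠ 0 ∧ |A.det| = Real.sqrt Sw.det ∧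
      (∀ y : Fin p → ℝ, (A *ᵥ y) ⬝ᵥ (Sw⁻¹ *ᵥ (A *ᵥ y)) = ∑ i, (y i) ^ 2) ∧
      (∀ y : Fin p → ℝ, (Sw⁻¹ *ᵥ d) ⬝ᵥ (A *ᵥ y) = Real.sqrt (d ⬝ᵥ (Sw⁻¹ *ᵥ d)) * y ⟨0, hp⟩) := by
  classical
  set i0 : Fin p := ⟨0, hp⟩ with hi0
  set B := CFC.sqrt Sw with hBdef
  have hBB : B * B = Sw := CFC.sqrt_mul_sqrt_self Sw hSw.posSemidef.nonneg
  have hdetSw : 0 < Sw.det := hSw.det_pos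
  have hdetB2 : B.det * B.det = Sw.det := by rw [← det_mul, hBB]
  have hdetB : B.det ≠ 0 := by
    intro h; rw [h, mul_zero] at hdetB2; exact hdetSw.ne hdetB2
  have hBunit : IsUnit B.det := isUnit_iff_ne_zero.mpr hdetB
  have hSwinv : Sw⁻¹ = B⁻¹ * B⁻¹ := by rw [← hBB, Matrix.mul_inv_rev]
  have hBherm : B.IsHermitian := (CFC.sqrt_nonneg Sw).posSemidef.1
  have hBsymm : Bᵀ = B := by
    have := hBherm; rwa [Matrix.IsHermitian, conjTranspose_eq_transpose_of_trivial] at this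
  have hBisymm : (B⁻¹)ᵀ = B⁻¹ := by rw [Matrix.transpose_nonsing_inv, hBsymm]
  have hB1 : B * B⁻¹ = 1 := Matrix.mul_nonsing_inv B hBunit
  have hB2 : B⁻¹ * B = 1 := Matrix.nonsing_inv_mul B hBunit
  set Δ : ℝ := Real.sqrt (d ⬝ᵥ (Sw⁻¹ *ᵥ d)) with hΔdef
  have hquad : 0 < d ⬝ᵥ (Sw⁻¹ *ᵥ d) := by
    have := hSw.inv.dotProduct_mulVec_pos hd
    simpa using this
  have hΔpos : 0 < Δ := Real.sqrt_pos.mpr hquad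
  set w : Fin p → ℝ := B⁻¹ *ᵥ d with hwdef
  have hww : w ⬝ᵥ w = d ⬝ᵥ (Sw⁻¹ *ᵥ d) := by
    rw [hSwinv, ← Matrix.mulVec_mulVec]
    rw [hwdef, aux_mulVec_dot, hBisymm]
  set v₀ : EuclideanSpace ℝ (Fin p) := WithLp.toLp 2 (Δ⁻¹ • w : Fin p → ℝ) with hv₀def
  have hinner : (inner ℝ v₀ v₀ : ℝ) = 1 := by
    rw [PiLp.inner_apply]
    simp only [RCLike.inner_apply, starRingEnd_apply, star_trivial]
    have h1 : ∑ i, v₀ i * v₀ i = Δ⁻¹ * Δ⁻¹ * (w ⬝ᵥ w) := by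
      simp only [hv₀def, dotProduct, Finset.mul_sum]
      refine Finset.sum_congr rfl fun i _ => ?_
      simp [PiLp.smul_apply, smul_eq_mul]; ring
    have hΔΔ : Δ * Δ = d ⬝ᵥ (Sw⁻¹ *ᵥ d) := Real.mul_self_sqrt hquad.le
    rw [h1, hww, ← hΔΔ]
    field_simp
  have hcard : Module.finrank ℝ (EuclideanSpace ℝ (Fin p)) = Fintype.card (Fin p) := by
    simp [finrank_euclideanSpace]
  have horth : Orthonormal ℝ (Set.restrict {i0} (fun _ : Fin p => v₀)) := by
    constructor
    · rintro ⟨i, hi⟩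
      show ‖v₀‖ = 1
      rw [@norm_eq_sqrt_re_inner ℝ, hinner]; simp
    · rintro ⟨i, hi⟩ ⟨j, hj⟩ hij
      exfalso
      simp only [Set.mem_singleton_iff] at hi hj
      exact hij (by simp [Subtype.ext_iff, hi, hj])
  obtain ⟨b, hb⟩ := horth.exists_orthonormalBasis_extension_of_card_eq hcard
  have hb0 : b i0 = v₀ := hb i0 rfl
  set O : Matrix (Fin p) (Fin p) ℝ := Matrix.of (fun i j => b j i) with hOdef
  have hbij : ∀ i j, (inner ℝ (b i) (b j) : ℝ) = if i = j then 1 else 0 :=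
    fun i j => orthonormal_iff_ite.mp b.orthonormal i j
  have hOO : Oᵀ * O = 1 := by
    ext i j
    simp only [Matrix.mul_apply, Matrix.transpose_apply, hOdef, Matrix.of_apply, Matrix.one_apply]
    have := hbij i j
    rw [PiLp.inner_apply] at this
    simpa [RCLike.inner_apply, starRingEnd_apply, mul_comm] using this
  have hdetO : O.det * O.det = 1 := by
    have := congrArg Matrix.det hOO
    rwa [det_mul, det_transpose, det_one] at this
  have hdetOne : O.det ≠ 0 := by
    intro h; rw [h, mul_zero] at hdetO; exact zero_ne_one hdetO
  refine ⟨B * O, ?_, ?_, ?_, ?_⟩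
  · rw [det_mul]; exact mul_ne_zero hdetB hdetOne
  · rw [det_mul, abs_mul]
    have h1 : |O.det| = 1 := by
      have : |O.det| * |O.det| = 1 := by rw [← abs_mul, hdetO, abs_one]
      nlinarith [abs_nonneg O.det]
    rw [h1, mul_one, ← hdetB2, ← sq, Real.sqrt_sq_eq_abs]
  · intro y
    have hA : (B * O)ᵀ * Sw⁻¹ * (B * O) = 1 := by
      rw [Matrix.transpose_mul, hBsymm, hSwinv]
      calc Oᵀ * B * (B⁻¹ * B⁻¹) * (B * O)
          = Oᵀ * ((B * B⁻¹) * (B⁻¹ * B) * O) := by noncomm_ring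
        _ = Oᵀ * O := by rw [hB1, hB2]; noncomm_ring
        _ = 1 := hOO
    rw [Matrix.mulVec_mulVec, aux_mulVec_dot, Matrix.mulVec_mulVec, ← Matrix.mul_assoc, hA,
      Matrix.one_mulVec]
    simp [dotProduct, sq]
  · intro y
    have hATu : (B * O)ᵀ *ᵥ (Sw⁻¹ *ᵥ d) = fun j => if j = i0 then Δ else 0 := by
      rw [Matrix.transpose_mul, hBsymm, hSwinv, ← Matrix.mulVec_mulVec, ← Matrix.mulVec_mulVec,
        ← hwdef, Matrix.mulVec_mulVec, Matrix.mulVec_mulVec, Matrix.mul_assoc, hB1,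
        Matrix.mul_one]
      ext j
      have hji := hbij j i0
      rw [PiLp.inner_apply, hb0] at hji
      simp only [RCLike.inner_apply, starRingEnd_apply, star_trivial] at hji
      have hv : ∀ k, (v₀ : Fin p → ℝ) k = Δ⁻¹ * w k := fun k => rfl
      have : ∑ k, b j k * w k = Δ * ∑ k, b j k * v₀ k := by
        rw [Finset.mul_sum]
        refine Finset.sum_congr rfl fun k _ => ?_
        rw [hv k]
        field_simp
      calc (Oᵀ *ᵥ w) j = ∑ k, b j k * w k := by
            simp [Matrix.mulVec, dotProduct, hOdef, Matrix.transpose_apply]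
        _ = Δ * ∑ k, b j k * v₀ k := this
        _ = Δ * (if j = i0 then 1 else 0) := by rw [← hji]; simp only [mul_comm]
        _ = (if j = i0 then Δ else 0) := by split <;> simp
    rw [dotProduct_comm, aux_mulVec_dot, hATu]
    simp only [dotProduct]
    rw [Finset.sum_eq_single i0]
    · simp [mul_comm]
    · intro j _ hj; simp [hj]
    · intro h; exact absurd (Finset.mem_univ i0) h

lemma aux_g_integrable : Integrable (fun t : ℝ => Real.exp (-(t ^ 2) / 2)) := by
  have : (fun t : ℝ => Real.exp (-(t ^ 2) / 2)) = fun x => Real.exp (-(1/2 : ℝ) * x ^ 2) := by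
    funext x; congr 1; ring
  rw [this]
  exact integrable_exp_neg_mul_sq (by norm_num)

lemma aux_g_integral : ∫ t : ℝ, Real.exp (-(t ^ 2) / 2) = Real.sqrt (2 * π) := by
  have : (fun t : ℝ => Real.exp (-(t ^ 2) / 2)) = fun x => Real.exp (-(1/2 : ℝ) * x ^ 2) := by
    funext x; congr 1; ring
  rw [this, integral_gaussian]
  congr 1; field_simp

set_option maxHeartbeats 1000000 in
lemma aux_tail_integral {p : ℕ} (hp : 0 < p) (Sw : Matrix (Fin p) (Fin p) ℝ) (hSw : Sw.PosDef)
    (m d : Fin p → ℝ) (hd : d ≠ 0) (c : ℝ)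
    (A : Matrix (Fin p) (Fin p) ℝ)
    (hdetA : A.det ≠ 0) (hdetAabs : |A.det| = Real.sqrt Sw.det)
    (hquadA : ∀ y : Fin p → ℝ, (A *ᵥ y) ⬝ᵥ (Sw⁻¹ *ᵥ (A *ᵥ y)) = ∑ i, (y i) ^ 2)
    (hlinA : ∀ y : Fin p → ℝ,
      (Sw⁻¹ *ᵥ d) ⬝ᵥ (A *ᵥ y) = Real.sqrt (d ⬝ᵥ (Sw⁻¹ *ᵥ d)) * y ⟨0, hp⟩) :
    (volume.withDensity fun x => ENNReal.ofReal (gaussianPdf m Sw x))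
        {x | c < (Sw⁻¹ *ᵥ d) ⬝ᵥ (x - m)}
      = ENNReal.ofReal (Qfun (c / Real.sqrt (d ⬝ᵥ (Sw⁻¹ *ᵥ d)))) := by
  classical
  set i0 : Fin p := ⟨0, hp⟩ with hi0
  set u : Fin p → ℝ := Sw⁻¹ *ᵥ d with hu
  set Δ : ℝ := Real.sqrt (d ⬝ᵥ (Sw⁻¹ *ᵥ d)) with hΔdef
  have hquad : 0 < d ⬝ᵥ (Sw⁻¹ *ᵥ d) := by
    have := hSw.inv.dotProduct_mulVec_pos hd
    simpa using this
  have hΔpos : 0 < Δ := Real.sqrt_pos.mpr hquad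
  set S₂ : Set (Fin p → ℝ) := {x | c < u ⬝ᵥ (x - m)} with hS₂def
  have hS₂ : MeasurableSet S₂ :=
    measurableSet_lt measurable_const (aux_dot_continuous u m).measurable
  have hdetSw : 0 < Sw.det := hSw.det_pos
  set K : ℝ := (2 * π) ^ (-(p : ℝ) / 2) * Sw.det ^ (-(1 : ℝ) / 2) with hK
  have h2π : (0:ℝ) < 2 * π := by positivity
  have hKpos : 0 < K := by
    apply mul_pos <;> exact Real.rpow_pos_of_pos (by positivity) _
  set g : ℝ → ℝ := fun t => Real.exp (-(t ^ 2) / 2) with hg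
  set g₀ : ℝ → ℝ := (Set.Ioi (c / Δ)).indicator g with hg₀
  set h : Fin p → ℝ → ℝ := fun i => if i = i0 then g₀ else g with hh
  have hpoint : ∀ y : Fin p → ℝ,
      S₂.indicator (gaussianPdf m Sw) (m + A *ᵥ y) = K * ∏ i, h i (y i) := by
    intro y
    have hval : gaussianPdf m Sw (m + A *ᵥ y) = K * Real.exp (-(1 / 2) * ∑ i, (y i) ^ 2) := by
      unfold gaussianPdf
      rw [add_sub_cancel_left, hquadA y]
    have hmem : (m + A *ᵥ y ∈ S₂) ↔ c / Δ < y i0 := by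
      have : u ⬝ᵥ (m + A *ᵥ y - m) = Δ * y i0 := by
        rw [add_sub_cancel_left]; exact hlinA y
      simp only [hS₂def, Set.mem_setOf_eq, this]
      rw [div_lt_iff₀' hΔpos]
    by_cases hy : c / Δ < y i0
    · rw [Set.indicator_of_mem (hmem.mpr hy), hval]
      have hprod : ∏ i, h i (y i) = ∏ i, g (y i) := by
        refine Finset.prod_congr rfl fun i _ => ?_
        by_cases hi : i = i0
        · subst hi
          simp only [hh, if_pos rfl, hg₀]
          exact Set.indicator_of_mem hy g
        · simp [hh, hi]
      rw [hprod]
      have : ∏ i, g (y i) = Real.exp (-(1 / 2) * ∑ i, (y i) ^ 2) := by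
        rw [← Real.exp_sum]
        congr 1
        rw [Finset.mul_sum]
        exact Finset.sum_congr rfl fun i _ => by ring
      rw [this]
    · rw [Set.indicator_of_notMem (fun hmem' => hy (hmem.mp hmem'))]
      have : h i0 (y i0) = 0 := by
        simp only [hh, if_pos rfl, hg₀]
        exact Set.indicator_of_notMem hy g
      rw [Finset.prod_eq_zero (Finset.mem_univ i0) this, mul_zero]
  set f : (Fin p → ℝ) →ₗ[ℝ] (Fin p → ℝ) := Matrix.toLin' A with hf
  have hfdet : LinearMap.det f = A.det := LinearMap.det_toLin' A
  have hfmeas : Measurable f := (LinearMap.continuous_on_pi f).measurable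
  have hmap : Measure.map f volume = ENNReal.ofReal |A.det|⁻¹ • volume := by
    have h0 := Real.map_linearMap_volume_pi_eq_smul_volume_pi
      (f := f) (by rw [hfdet]; exact hdetA)
    rw [hfdet] at h0
    rwa [abs_inv] at h0
  have hvol : (volume : Measure (Fin p → ℝ)) = ENNReal.ofReal |A.det| • Measure.map f volume := by
    rw [hmap, smul_smul, ← ENNReal.ofReal_mul (abs_nonneg _),
      mul_inv_cancel₀ (abs_ne_zero.mpr hdetA), ENNReal.ofReal_one, one_smul]
  set G : (Fin p → ℝ) → ENNReal := fun x => ENNReal.ofReal (S₂.indicator (gaussianPdf m Sw) x)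
    with hG
  have hGmeas : Measurable G :=
    (((aux_pdf_continuous m Sw).measurable).indicator hS₂).ennreal_ofReal
  have step1 : (volume.withDensity fun x => ENNReal.ofReal (gaussianPdf m Sw x)) S₂
      = ∫⁻ x, G x := by
    rw [withDensity_apply _ hS₂, ← lintegral_indicator hS₂]
    refine lintegral_congr fun x => ?_
    by_cases hx : x ∈ S₂ <;> simp [hG, hx]
  have step2 : ∫⁻ x, G x = ∫⁻ x, G (m + x) := (lintegral_add_left_eq_self G m).symm
  have step3 : ∫⁻ x, G (m + x)
      = ENNReal.ofReal |A.det| * ∫⁻ y : Fin p → ℝ, G (m + A *ᵥ y) := by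
    conv_lhs => rw [hvol]
    rw [lintegral_smul_measure]
    congr 1
    have hm1 : Measurable fun x : Fin p → ℝ => G (m + x) :=
      hGmeas.comp (measurable_const.add measurable_id)
    rw [lintegral_map hm1 hfmeas]
    refine lintegral_congr fun y => ?_
    simp only [hf, Matrix.toLin'_apply]
  have step4 : ∫⁻ y : Fin p → ℝ, G (m + A *ᵥ y)
      = ENNReal.ofReal K * ∫⁻ y : Fin p → ℝ, ENNReal.ofReal (∏ i, h i (y i)) := by
    refine Eq.trans (lintegral_congr fun y => ?_)
      (lintegral_const_mul' _ _ ENNReal.ofReal_ne_top)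
    show ENNReal.ofReal (S₂.indicator (gaussianPdf m Sw) (m + A *ᵥ y)) = _
    rw [hpoint y, ENNReal.ofReal_mul hKpos.le]
  have hgint : Integrable g := aux_g_integrable
  have hg₀int : Integrable g₀ := hgint.indicator measurableSet_Ioi
  have hhint : ∀ i, Integrable (h i) := by
    intro i
    by_cases hi : i = i0 <;> simp [hh, hi, hgint, hg₀int]
  have hint : Integrable (fun y : Fin p → ℝ => ∏ i, h i (y i)) :=
    Integrable.fintype_prod (𝕜 := ℝ) hhint
  have hnn : ∀ y : Fin p → ℝ, 0 ≤ ∏ i, h i (y i) := by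
    intro y
    refine Finset.prod_nonneg fun i _ => ?_
    by_cases hi : i = i0
    · simp only [hh, hi, if_pos rfl, hg₀]
      exact Set.indicator_nonneg (fun t _ => (Real.exp_pos _).le) _
    · simp only [hh, if_neg hi, hg]
      exact (Real.exp_pos _).le
  have step5 : ∫⁻ y : Fin p → ℝ, ENNReal.ofReal (∏ i, h i (y i))
      = ENNReal.ofReal (∫ y : Fin p → ℝ, ∏ i, h i (y i)) :=
    (ofReal_integral_eq_lintegral_ofReal hint (Filter.Eventually.of_forall hnn)).symm
  have hs2π : (0:ℝ) < Real.sqrt (2 * π) := Real.sqrt_pos.mpr h2π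
  have hintg : ∫ t, g t = Real.sqrt (2 * π) := aux_g_integral
  have hintg₀ : ∫ t, g₀ t = Real.sqrt (2 * π) * Qfun (c / Δ) := by
    rw [hg₀, integral_indicator measurableSet_Ioi]
    unfold Qfun
    rw [← mul_assoc]
    rw [mul_one_div, div_self hs2π.ne', one_mul]
  have hprodint : ∫ y : Fin p → ℝ, ∏ i, h i (y i)
      = (Real.sqrt (2 * π) * Qfun (c / Δ)) * Real.sqrt (2 * π) ^ (p - 1) := by
    rw [MeasureTheory.volume_pi, integral_fintype_prod_eq_prod (𝕜 := ℝ) h]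
    rw [← Finset.mul_prod_erase Finset.univ _ (Finset.mem_univ i0)]
    have h1 : ∫ t, h i0 t = Real.sqrt (2 * π) * Qfun (c / Δ) := by
      simp only [hh, if_pos rfl]; exact hintg₀
    have h2 : ∏ i ∈ Finset.univ.erase i0, ∫ t, h i t = Real.sqrt (2 * π) ^ (p - 1) := by
      rw [Finset.prod_congr rfl (fun i hi => ?_), Finset.prod_const,
        Finset.card_erase_of_mem (Finset.mem_univ i0), Finset.card_univ, Fintype.card_fin]
      rw [show h i = g from by simp [hh, (Finset.mem_erase.mp hi).1], hintg]
    rw [h1, h2]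
  have hconst : |A.det| * K * Real.sqrt (2 * π) ^ p = 1 := by
    have hsp : Real.sqrt (2 * π) ^ p = (2 * π) ^ ((p : ℝ) / 2) := by
      rw [Real.sqrt_eq_rpow, ← Real.rpow_natCast ((2 * π) ^ ((1:ℝ)/2)) p,
        ← Real.rpow_mul h2π.le]
      congr 1; ring
    have hd2 : Sw.det ^ (-(1 : ℝ) / 2) = (Real.sqrt Sw.det)⁻¹ := by
      rw [show (-(1:ℝ)/2) = -(1/2 : ℝ) by ring, Real.rpow_neg hdetSw.le,
        ← Real.sqrt_eq_rpow]
    have h2πp : (2 * π) ^ (-(p : ℝ) / 2) * (2 * π) ^ ((p : ℝ) / 2) = 1 := by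
      rw [← Real.rpow_add h2π, show (-(p:ℝ)/2 + (p:ℝ)/2) = 0 by ring, Real.rpow_zero]
    rw [hdetAabs, hK, hsp, hd2]
    have hsd : (0:ℝ) < Real.sqrt Sw.det := Real.sqrt_pos.mpr hdetSw
    field_simp
    rw [neg_div] at h2πp; linarith [h2πp]
  rw [step1, step2, step3, step4, step5, hprodint]
  rw [← ENNReal.ofReal_mul (by positivity), ← ENNReal.ofReal_mul (abs_nonneg _)]
  congr 1
  have hpow : Real.sqrt (2 * π) * Real.sqrt (2 * π) ^ (p - 1) = Real.sqrt (2 * π) ^ p := by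
    rw [← pow_succ']
    congr 1
    omega
  calc |A.det| * (K * (Real.sqrt (2 * π) * Qfun (c / Δ) * Real.sqrt (2 * π) ^ (p - 1)))
      = (|A.det| * K * (Real.sqrt (2 * π) * Real.sqrt (2 * π) ^ (p - 1))) * Qfun (c / Δ) := by
        ring
    _ = Qfun (c / Δ) := by rw [hpow, hconst, one_mul]

/-- **Core Gaussian mechanism bound.** For Gaussian measures with common covariance `Σ_w`
and means `m ≠ m'`, with `Δ = |m - m'|_{Σ_w⁻¹}`, one has
`ν_m(S) ≤ e^ε ν_{m'}(S) + Q(ε/Δ - Δ/2)` for every Borel set `S`. -/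
theorem gaussian_shift_privacy_bound
    {p : ℕ} (hp : 1 ≤ p)
    (Sw : Matrix (Fin p) (Fin p) ℝ) (hSw : Sw.PosDef)
    (m m' : Fin p → ℝ) (hmm : m ≠ m')
    (ε : ℝ) (hε : 0 < ε) :
    0 < wnorm Sw⁻¹ (m - m') ∧
      ∀ S : Set (Fin p → ℝ), MeasurableSet S →
        gaussianMeasure m Sw S
          ≤ ENNReal.ofReal (Real.exp ε) * gaussianMeasure m' Sw S
            + ENNReal.ofReal
                (Qfun (ε / wnorm Sw⁻¹ (m - m') - wnorm Sw⁻¹ (m - m') / 2)) := by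
  classical
  have hp0 : 0 < p := hp
  set d : Fin p → ℝ := m - m' with hd'
  have hd : d ≠ 0 := sub_ne_zero.mpr hmm
  have hq : 0 < d ⬝ᵥ (Sw⁻¹ *ᵥ d) := by
    have := hSw.inv.dotProduct_mulVec_pos hd
    simpa using this
  set q : ℝ := d ⬝ᵥ (Sw⁻¹ *ᵥ d) with hqdef
  set Δ : ℝ := Real.sqrt q with hΔdef
  have hΔpos : 0 < Δ := Real.sqrt_pos.mpr hq
  have hwnorm : wnorm Sw⁻¹ (m - m') = Δ := rfl
  have hΔΔ : Δ * Δ = q := Real.mul_self_sqrt hq.le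
  refine ⟨hΔpos, fun S hS => ?_⟩
  set u : Fin p → ℝ := Sw⁻¹ *ᵥ d with hu
  set c : ℝ := ε - q / 2 with hc
  set S₂ : Set (Fin p → ℝ) := {x | c < u ⬝ᵥ (x - m)} with hS₂def
  have hS₂ : MeasurableSet S₂ :=
    measurableSet_lt measurable_const (aux_dot_continuous u m).measurable
  -- pointwise bound off S₂
  have hSymm : (Sw⁻¹)ᵀ = Sw⁻¹ := by
    have := hSw.inv.isHermitian
    rwa [Matrix.IsHermitian, conjTranspose_eq_transpose_of_trivial] at this
  have hpoint : ∀ x : Fin p → ℝ, x ∉ S₂ →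
      gaussianPdf m Sw x ≤ Real.exp ε * gaussianPdf m' Sw x := by
    intro x hx
    have hL : u ⬝ᵥ (x - m) ≤ c := le_of_not_gt hx
    have hexpand : (x - m') ⬝ᵥ (Sw⁻¹ *ᵥ (x - m'))
        = (x - m) ⬝ᵥ (Sw⁻¹ *ᵥ (x - m)) + 2 * (u ⬝ᵥ (x - m)) + q := by
      have hxm : x - m' = (x - m) + d := by rw [hd']; abel
      rw [hxm, Matrix.mulVec_add, dotProduct_add, add_dotProduct,
        add_dotProduct]
      have hcross : d ⬝ᵥ (Sw⁻¹ *ᵥ (x - m)) = (x - m) ⬝ᵥ (Sw⁻¹ *ᵥ d) :=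
        aux_dot_symm Sw⁻¹ hSymm d (x - m)
      rw [hcross]
      have h2 : u ⬝ᵥ (x - m) = (x - m) ⬝ᵥ (Sw⁻¹ *ᵥ d) := by
        rw [hu]; exact dotProduct_comm _ _
      rw [h2, hqdef, hu]
      ring
    unfold gaussianPdf
    set C : ℝ := (2 * π) ^ (-(p : ℝ) / 2) * Sw.det ^ (-(1 : ℝ) / 2) with hC
    have hdetSw : 0 < Sw.det := hSw.det_pos
    have hCpos : 0 < C := by
      apply mul_pos <;> exact Real.rpow_pos_of_pos (by positivity) _
    rw [show Real.exp ε * (C * Real.exp (-(1 / 2) * ((x - m') ⬝ᵥ (Sw⁻¹ *ᵥ (x - m')))))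
        = C * Real.exp (ε + -(1 / 2) * ((x - m') ⬝ᵥ (Sw⁻¹ *ᵥ (x - m')))) by
      rw [Real.exp_add]; ring]
    refine mul_le_mul_of_nonneg_left (Real.exp_le_exp.mpr ?_) hCpos.le
    rw [hexpand]
    have : u ⬝ᵥ (x - m) ≤ ε - q / 2 := hL
    linarith
  -- decompose S
  have hsub : S ⊆ (S ∩ S₂ᶜ) ∪ S₂ := by
    intro x hx
    by_cases h : x ∈ S₂
    · exact Or.inr h
    · exact Or.inl ⟨hx, h⟩
  have hsplit : gaussianMeasure m Sw S
      ≤ gaussianMeasure m Sw (S ∩ S₂ᶜ) + gaussianMeasure m Sw S₂ :=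
    le_trans (measure_mono hsub) (measure_union_le _ _)
  -- first piece
  have hmeas1 : MeasurableSet (S ∩ S₂ᶜ) := hS.inter hS₂.compl
  have hpiece1 : gaussianMeasure m Sw (S ∩ S₂ᶜ)
      ≤ ENNReal.ofReal (Real.exp ε) * gaussianMeasure m' Sw S := by
    rw [gaussianMeasure, withDensity_apply _ hmeas1]
    have hb1 : ∫⁻ x in S ∩ S₂ᶜ, ENNReal.ofReal (gaussianPdf m Sw x)
        ≤ ∫⁻ x in S ∩ S₂ᶜ, ENNReal.ofReal (Real.exp ε) *
            ENNReal.ofReal (gaussianPdf m' Sw x) := by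
      refine setLIntegral_mono
        (((aux_pdf_continuous m' Sw).measurable).ennreal_ofReal.const_mul _) fun x hx => ?_
      rw [← ENNReal.ofReal_mul (Real.exp_pos ε).le]
      exact ENNReal.ofReal_le_ofReal (hpoint x (fun h => hx.2 h))
    refine le_trans hb1 ?_
    rw [lintegral_const_mul' _ _ ENNReal.ofReal_ne_top]
    refine mul_le_mul_right ?_ _
    rw [gaussianMeasure, withDensity_apply _ hS]
    exact lintegral_mono_set Set.inter_subset_left
  -- second piece
  obtain ⟨A, hdetA, hdetAabs, hquadA, hlinA⟩ := aux_exists_A hp0 Sw hSw d hd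
  have hpiece2 : gaussianMeasure m Sw S₂ = ENNReal.ofReal (Qfun (c / Δ)) := by
    rw [gaussianMeasure]
    exact aux_tail_integral hp0 Sw hSw m d hd c A hdetA hdetAabs hquadA hlinA
  have hcΔ : c / Δ = ε / Δ - Δ / 2 := by
    rw [hc, ← hΔΔ, sub_div]
    congr 1
    rw [div_div, mul_comm (2:ℝ) Δ, ← div_div, mul_div_assoc, div_self hΔpos.ne', mul_one]
  refine le_trans hsplit ?_
  rw [hpiece2, hcΔ, hwnorm]
  exact add_le_add_left hpiece1 _
end

section
/- Let p, q ≥ 1 with p ≤ q, let N ∈ ℝ^{p×q} have full row rank p, let Σ ∈ ℝ^{q×q} be positive definite, and let r > 0. Define Σ_w* := r² · N Σ Nᵀ. Then: (i) Σ_w* is positive definite; (ii) λ_max(Σ^{1/2} Nᵀ (Σ_w*)^{−1} N Σ^{1/2}) ≤ 1/r²; and (iii) every positive definite Σ_w ∈ ℝ^{p×p} satisfying λ_max(Σ^{1/2} Nᵀ Σ_w^{−1} N Σ^{1/2}) ≤ 1/r² satisfies Σ_w − Σ_w* ⪰ 0 and hence Tr(Σ_w) ≥ Tr(Σ_w*).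 (Theorem 3: Σ_w* is the minimum-trace Gaussian noise covariance satisfying the Bayesian differential privacy constraint with r = c(γ,q)·R(ε,δ).) -/
open MeasureTheory Matrix Real

/-- The square root of a positive semidefinite matrix, as `Matrix.PosSemidef.sqrt` was defined
in Mathlib (Dec 2024); it has since been removed in favour of `CFC.sqrt`. -/
noncomputable def Matrix.PosSemidef.sqrt {n : Type*} [Fintype n] [DecidableEq n] {𝕜 : Type*} [RCLike 𝕜]
    [PartialOrder 𝕜] [StarOrderedRing 𝕜]
    {A : Matrix n n 𝕜} (hA : A.PosSemidef) : Matrix n n 𝕜 :=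
  hA.1.eigenvectorUnitary.1 * diagonal ((↑) ∘ (√·) ∘ hA.1.eigenvalues) *
    (star hA.1.eigenvectorUnitary : Matrix n n 𝕜)

namespace MTNC
open Pointwise

lemma sqrt_mul_self' {n : ℕ} {A : Matrix (Fin n) (Fin n) ℝ} (hA : A.PosSemidef) :
    hA.sqrt * hA.sqrt = A := by
  unfold Matrix.PosSemidef.sqrt
  have hU : (star hA.1.eigenvectorUnitary : Matrix (Fin n) (Fin n) ℝ) * hA.1.eigenvectorUnitary.1
      = 1 := Unitary.coe_star_mul_self _
  conv_rhs => rw [hA.1.spectral_theorem, Unitary.conjStarAlgAut_apply]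
  simp only [Matrix.mul_assoc]
  rw [← Matrix.mul_assoc (star hA.1.eigenvectorUnitary : Matrix (Fin n) (Fin n) ℝ), hU,
    Matrix.one_mul, ← Matrix.mul_assoc (diagonal _), diagonal_mul_diagonal]
  congr 3
  funext i
  simp [Real.mul_self_sqrt (hA.eigenvalues_nonneg i)]

lemma posSemidef_sqrt' {n : ℕ} {A : Matrix (Fin n) (Fin n) ℝ} (hA : A.PosSemidef) :
    hA.sqrt.PosSemidef := by
  unfold Matrix.PosSemidef.sqrt
  rw [star_eq_conjTranspose]
  apply PosSemidef.mul_mul_conjTranspose_same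
  apply PosSemidef.diagonal
  intro i
  simp [Real.sqrt_nonneg]


lemma dp_mulVec_left {m n : ℕ} (M : Matrix (Fin m) (Fin n) ℝ) (z : Fin n → ℝ) (w : Fin m → ℝ) :
    (M *ᵥ z) ⬝ᵥ w = z ⬝ᵥ (Mᵀ *ᵥ w) := by
  rw [dotProduct_comm, dotProduct_mulVec, ← mulVec_transpose, dotProduct_comm]

lemma dp_mulVec_right {m n : ℕ} (M : Matrix (Fin m) (Fin n) ℝ) (x : Fin m → ℝ) (w : Fin n → ℝ) :
    x ⬝ᵥ (M *ᵥ w) = (Mᵀ *ᵥ x) ⬝ᵥ w := by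
  rw [dotProduct_mulVec, ← mulVec_transpose]

lemma dp_self_nonneg {n : ℕ} (x : Fin n → ℝ) : 0 ≤ x ⬝ᵥ x :=
  Finset.sum_nonneg fun i _ => mul_self_nonneg (x i)

lemma dp_sq_le {n : ℕ} (x y : Fin n → ℝ) : (x ⬝ᵥ y) ^ 2 ≤ (x ⬝ᵥ x) * (y ⬝ᵥ y) := by
  simpa [dotProduct, sq] using Finset.sum_mul_sq_le_sq_mul_sq Finset.univ x y




lemma spectrum_le_of_sq_eq_smul {n : ℕ} (A : Matrix (Fin n) (Fin n) ℝ) (c : ℝ) (hc : 0 ≤ c)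
    (hA : A * A = c • A) : ∀ μ ∈ spectrum ℝ A, μ ≤ c := by
  intro μ hμ
  by_contra hlt
  push_neg at hlt
  have hμ0 : μ ≠ 0 := by linarith
  have hμc : μ - c ≠ 0 := by linarith
  have he : μ * (μ - c) ≠ 0 := mul_ne_zero hμ0 hμc
  set e : ℝ := (μ * (μ - c))⁻¹ with hedef
  have h5 : e * (μ - c) = μ⁻¹ := by
    rw [hedef, mul_inv, mul_assoc, inv_mul_cancel₀ hμc, mul_one]
  have coeff : μ * e - (μ⁻¹ + e * c) = 0 := by linear_combination h5
  have h1 : (μ • (1 : Matrix (Fin n) (Fin n) ℝ) - A) * (μ⁻¹ • 1 + e • A) = 1 := by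
    have : (μ • (1 : Matrix (Fin n) (Fin n) ℝ) - A) * (μ⁻¹ • 1 + e • A)
        = (μ * μ⁻¹) • (1 : Matrix (Fin n) (Fin n) ℝ)
          + (μ * e - (μ⁻¹ + e * c)) • A := by
      simp only [sub_mul, mul_add, smul_mul_assoc, mul_smul_comm, one_mul, mul_one, hA,
        smul_smul]
      module
    rw [this, coeff, zero_smul, add_zero, mul_inv_cancel₀ hμ0, one_smul]
  have h2 : (μ⁻¹ • 1 + e • A) * (μ • (1 : Matrix (Fin n) (Fin n) ℝ) - A) = 1 := by
    have : (μ⁻¹ • 1 + e • A) * (μ • (1 : Matrix (Fin n) (Fin n) ℝ) - A)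
        = (μ⁻¹ * μ) • (1 : Matrix (Fin n) (Fin n) ℝ)
          + (e * μ - (μ⁻¹ + c * e)) • A := by
      simp only [mul_sub, add_mul, smul_mul_assoc, mul_smul_comm, one_mul, mul_one, hA,
        smul_smul]
      module
    have coeff' : e * μ - (μ⁻¹ + c * e) = 0 := by rw [← coeff]; ring
    rw [this, coeff', zero_smul, add_zero, inv_mul_cancel₀ hμ0, one_smul]
  have : IsUnit (algebraMap ℝ (Matrix (Fin n) (Fin n) ℝ) μ - A) := by
    rw [Algebra.algebraMap_eq_smul_one]
    exact ⟨⟨_, _, h1, h2⟩, rfl⟩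
  exact (spectrum.mem_iff.mp hμ) this

lemma quadform_le_of_lambdaMax {n : ℕ} {A : Matrix (Fin n) (Fin n) ℝ} (hA : A.IsHermitian)
    {c : ℝ} (h : sSup (spectrum ℝ A) ≤ c) (x : Fin n → ℝ) :
    x ⬝ᵥ (A *ᵥ x) ≤ c * (x ⬝ᵥ x) := by
  have hAt : Aᵀ = A := by
    rw [← conjTranspose_eq_transpose_of_trivial]; exact hA.eq
  have hherm : (c • (1 : Matrix (Fin n) (Fin n) ℝ) - A).IsHermitian := by
    simp [Matrix.IsHermitian, conjTranspose_sub, conjTranspose_smul, hAt]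
  have hB : (c • (1 : Matrix (Fin n) (Fin n) ℝ) - A).PosSemidef := by
    apply hherm.posSemidef_iff_eigenvalues_nonneg.mpr
    intro i
    have hmem : hherm.eigenvalues i ∈ ({c} : Set ℝ) - spectrum ℝ A := by
      rw [spectrum.singleton_sub_eq, Algebra.algebraMap_eq_smul_one]
      exact hherm.eigenvalues_mem_spectrum_real i
    obtain ⟨a, ha, b, hb, hab⟩ := Set.mem_sub.mp hmem
    have hac : a = c := Set.mem_singleton_iff.mp ha
    have hble : b ≤ c := le_trans (le_csSup (A.finite_spectrum).bddAbove hb) h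
    rw [← hab, hac, Pi.zero_apply]
    linarith
  have := hB.dotProduct_mulVec_nonneg x
  simp only [star_trivial, sub_mulVec, smul_mulVec, one_mulVec, dotProduct_sub,
    dotProduct_smul, smul_eq_mul] at this
  linarith

lemma transfer {p q : ℕ} (A : Matrix (Fin p) (Fin q) ℝ) (c : ℝ) (hc : 0 ≤ c)
    (h : ∀ x, (A *ᵥ x) ⬝ᵥ (A *ᵥ x) ≤ c * (x ⬝ᵥ x)) (y : Fin p → ℝ) :
    (Aᵀ *ᵥ y) ⬝ᵥ (Aᵀ *ᵥ y) ≤ c * (y ⬝ᵥ y) := by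
  set u := Aᵀ *ᵥ y with hu
  have huy : u ⬝ᵥ u = y ⬝ᵥ (A *ᵥ u) := by
    rw [hu, dp_mulVec_left, transpose_transpose, dp_mulVec_right]
  have hcs : (y ⬝ᵥ (A *ᵥ u)) ^ 2 ≤ (y ⬝ᵥ y) * ((A *ᵥ u) ⬝ᵥ (A *ᵥ u)) := dp_sq_le _ _
  have h1 : (A *ᵥ u) ⬝ᵥ (A *ᵥ u) ≤ c * (u ⬝ᵥ u) := h u
  have h0u : 0 ≤ u ⬝ᵥ u := dp_self_nonneg u
  have h0y : 0 ≤ y ⬝ᵥ y := dp_self_nonneg y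
  by_cases ht : u ⬝ᵥ u = 0
  · calc u ⬝ᵥ u = 0 := ht
      _ ≤ c * (y ⬝ᵥ y) := mul_nonneg hc h0y
  · have ht' : 0 < u ⬝ᵥ u := lt_of_le_of_ne h0u (Ne.symm ht)
    have e1 : (u ⬝ᵥ u) * (u ⬝ᵥ u) = (y ⬝ᵥ (A *ᵥ u)) ^ 2 := by rw [← huy]; ring
    have e2 : (y ⬝ᵥ y) * ((A *ᵥ u) ⬝ᵥ (A *ᵥ u)) ≤ (y ⬝ᵥ y) * (c * (u ⬝ᵥ u)) :=
      mul_le_mul_of_nonneg_left h1 h0y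
    have key : (u ⬝ᵥ u) * (u ⬝ᵥ u) ≤ (c * (y ⬝ᵥ y)) * (u ⬝ᵥ u) := by nlinarith [hcs, e1, e2]
    exact le_of_mul_le_mul_right key ht' 

lemma psd_trace_nonneg {n : ℕ} {M : Matrix (Fin n) (Fin n) ℝ} (hM : M.PosSemidef) :
    0 ≤ M.trace := by
  apply Finset.sum_nonneg
  intro i _
  have := hM.dotProduct_mulVec_nonneg (Pi.single i 1)
  simpa [single_dotProduct, mulVec_single] using this

lemma inj_of_rank {p q : ℕ} (N : Matrix (Fin p) (Fin q) ℝ) (hN : N.rank = p) :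
    Function.Injective (fun x : Fin p → ℝ => Nᵀ *ᵥ x) := by
  have h1 : (Nᵀ).rank = p := by rw [Matrix.rank_transpose]; exact hN
  have h2 := LinearMap.finrank_range_add_finrank_ker (Nᵀ).mulVecLin
  rw [Matrix.rank] at h1
  rw [h1, Module.finrank_fin_fun] at h2
  have hker : LinearMap.ker (Nᵀ).mulVecLin = ⊥ := by
    rw [← Submodule.finrank_eq_zero (R := ℝ)]
    omega
  have := LinearMap.ker_eq_bot.mp hker
  exact this



lemma posdef_NSN {p q : ℕ} (N : Matrix (Fin p) (Fin q) ℝ)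
    (hinj : Function.Injective (fun x : Fin p → ℝ => Nᵀ *ᵥ x))
    {Sig : Matrix (Fin q) (Fin q) ℝ} (hSig : Sig.PosDef) : (N * Sig * Nᵀ).PosDef := by
  have hSigt : Sigᵀ = Sig := by
    rw [← conjTranspose_eq_transpose_of_trivial]; exact hSig.isHermitian.eq
  refine Matrix.PosDef.of_dotProduct_mulVec_pos ?_ ?_
  · rw [Matrix.IsHermitian, conjTranspose_eq_transpose_of_trivial, transpose_mul, transpose_mul,
      transpose_transpose, hSigt, Matrix.mul_assoc]
  · intro x hx
    have hy : Nᵀ *ᵥ x ≠ 0 := by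
      intro h0
      exact hx (hinj (show Nᵀ *ᵥ x = Nᵀ *ᵥ 0 by rw [h0, mulVec_zero]))
    have hpos := hSig.dotProduct_mulVec_pos hy
    rw [star_trivial] at hpos
    rw [star_trivial]
    calc (0:ℝ) < (Nᵀ *ᵥ x) ⬝ᵥ (Sig *ᵥ (Nᵀ *ᵥ x)) := hpos
      _ = x ⬝ᵥ ((N * Sig * Nᵀ) *ᵥ x) := by
          rw [← dp_mulVec_right, mulVec_mulVec, mulVec_mulVec]

lemma posdef_smul {n : ℕ} {M : Matrix (Fin n) (Fin n) ℝ} (hM : M.PosDef) {a : ℝ}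
    (ha : 0 < a) : (a • M).PosDef := by
  refine Matrix.PosDef.of_dotProduct_mulVec_pos ?_ ?_
  · rw [Matrix.IsHermitian, conjTranspose_smul, star_trivial, hM.isHermitian.eq]
  · intro x hx
    have := hM.dotProduct_mulVec_pos hx
    rw [smul_mulVec, dotProduct_smul, smul_eq_mul]
    rw [star_trivial] at this ⊢
    exact mul_pos ha this


end MTNC

/-- **Theorem 3.** For full-row-rank `N` and `Σ_w* = r² N Σ Nᵀ`: `Σ_w*` is positive
definite, it satisfies the privacy constraint
`λ_max(Σ^{1/2} Nᵀ (Σ_w*)⁻¹ N Σ^{1/2}) ≤ 1/r²`, and any positive definite `Σ_w`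
satisfying this constraint dominates `Σ_w*` in the Loewner order, hence in trace. -/
theorem min_trace_noise_covariance
    {p q : ℕ} (hp : 1 ≤ p) (hq : 1 ≤ q) (hpq : p ≤ q)
    (N : Matrix (Fin p) (Fin q) ℝ) (hN : N.rank = p)
    (Sig : Matrix (Fin q) (Fin q) ℝ) (hSig : Sig.PosDef)
    (r : ℝ) (hr : 0 < r) :
    (r ^ 2 • (N * Sig * Nᵀ)).PosDef ∧
    lambdaMax ((PosSemidef.sqrt hSig.posSemidef) * Nᵀ * (r ^ 2 • (N * Sig * Nᵀ))⁻¹ * N * (PosSemidef.sqrt hSig.posSemidef))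
      ≤ 1 / r ^ 2 ∧
    ∀ Sw : Matrix (Fin p) (Fin p) ℝ, Sw.PosDef →
      lambdaMax ((PosSemidef.sqrt hSig.posSemidef) * Nᵀ * Sw⁻¹ * N * (PosSemidef.sqrt hSig.posSemidef)) ≤ 1 / r ^ 2 →
      (Sw - r ^ 2 • (N * Sig * Nᵀ)).PosSemidef ∧
        (r ^ 2 • (N * Sig * Nᵀ)).trace ≤ Sw.trace := by
  classical
  set S := hSig.posSemidef.sqrt with hSdef
  have hS : S.PosSemidef := MTNC.posSemidef_sqrt' hSig.posSemidef
  have hSS : S * S = Sig := MTNC.sqrt_mul_self' hSig.posSemidef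
  have hSt : Sᵀ = S := by
    rw [← Matrix.conjTranspose_eq_transpose_of_trivial]; exact hS.1.eq
  set B := N * Sig * Nᵀ with hBdef
  have hinj := MTNC.inj_of_rank N hN
  have hB : B.PosDef := MTNC.posdef_NSN N hinj hSig
  have hBdet : IsUnit B.det := hB.det_pos.ne'.isUnit
  have hBBinv : B * B⁻¹ = 1 := Matrix.mul_nonsing_inv _ hBdet
  have hBinvB : B⁻¹ * B = 1 := Matrix.nonsing_inv_mul _ hBdet
  have hr2 : (0:ℝ) < r ^ 2 := by positivity
  have hW : (r ^ 2 • B).PosDef := MTNC.posdef_smul hB hr2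
  have hNSSN : N * S * (S * Nᵀ) = B := by
    rw [Matrix.mul_assoc N S, ← Matrix.mul_assoc S S, hSS, ← Matrix.mul_assoc]
  refine ⟨hW, ?_, ?_⟩
  · -- part (ii)
    have hinv : (r ^ 2 • B)⁻¹ = (r ^ 2)⁻¹ • B⁻¹ := by
      apply Matrix.inv_eq_right_inv
      rw [Matrix.smul_mul, Matrix.mul_smul, hBBinv, smul_smul, mul_inv_cancel₀ hr2.ne',
        one_smul]
    have hPP : (S * Nᵀ * B⁻¹ * N * S) * (S * Nᵀ * B⁻¹ * N * S) = S * Nᵀ * B⁻¹ * N * S := by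
      calc S * Nᵀ * B⁻¹ * N * S * (S * Nᵀ * B⁻¹ * N * S)
          = S * Nᵀ * B⁻¹ * (N * S * (S * Nᵀ)) * (B⁻¹ * (N * S)) := by
            simp only [Matrix.mul_assoc]
        _ = S * Nᵀ * B⁻¹ * B * (B⁻¹ * (N * S)) := by rw [hNSSN]
        _ = S * Nᵀ * ((B⁻¹ * B) * B⁻¹) * (N * S) := by simp only [Matrix.mul_assoc]
        _ = S * Nᵀ * B⁻¹ * N * S := by rw [hBinvB, one_mul]; simp only [Matrix.mul_assoc]
    have hCeq : S * Nᵀ * (r ^ 2 • B)⁻¹ * N * S = (r ^ 2)⁻¹ • (S * Nᵀ * B⁻¹ * N * S) := by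
      rw [hinv, Matrix.mul_smul, Matrix.smul_mul, Matrix.smul_mul]
    rw [hCeq]
    unfold lambdaMax
    apply Real.sSup_le _ (by positivity)
    intro μ hμ
    have hsq : ((r ^ 2)⁻¹ • (S * Nᵀ * B⁻¹ * N * S)) * ((r ^ 2)⁻¹ • (S * Nᵀ * B⁻¹ * N * S))
        = (r ^ 2)⁻¹ • ((r ^ 2)⁻¹ • (S * Nᵀ * B⁻¹ * N * S)) := by
      rw [Matrix.smul_mul, Matrix.mul_smul, hPP]
    have := MTNC.spectrum_le_of_sq_eq_smul _ ((r ^ 2)⁻¹) (by positivity) hsq μ hμ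
    rw [one_div]
    exact this
  · -- part (iii)
    intro Sw hSw hcon
    have hSwdet : IsUnit Sw.det := hSw.det_pos.ne'.isUnit
    have hSwInv : Sw⁻¹.PosDef := hSw.inv
    set V := hSwInv.posSemidef.sqrt with hVdef
    have hV : V.PosSemidef := MTNC.posSemidef_sqrt' hSwInv.posSemidef
    have hVV : V * V = Sw⁻¹ := MTNC.sqrt_mul_self' hSwInv.posSemidef
    have hVt : Vᵀ = V := by
      rw [← Matrix.conjTranspose_eq_transpose_of_trivial]; exact hV.1.eq
    have hVdet : IsUnit V.det := by
      have hd : V.det * V.det = (Sw⁻¹).det := by rw [← Matrix.det_mul, hVV]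
      have h2 : (Sw⁻¹).det ≠ 0 := hSwInv.det_pos.ne'
      have h3 : V.det ≠ 0 := by
        intro h
        exact h2 (by rw [← hd, h, zero_mul])
      exact h3.isUnit
    have hVVinv : V * V⁻¹ = 1 := Matrix.mul_nonsing_inv _ hVdet
    set A := V * (N * S) with hAdef
    have hAt : Aᵀ = S * Nᵀ * V := by
      rw [hAdef, Matrix.transpose_mul, Matrix.transpose_mul, hVt, hSt]
    have hD : S * Nᵀ * Sw⁻¹ * N * S = Aᵀ * A := by
      rw [hAt, hAdef]
      calc S * Nᵀ * Sw⁻¹ * N * S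
          = S * Nᵀ * (V * V) * (N * S) := by rw [hVV]; simp only [Matrix.mul_assoc]
        _ = S * Nᵀ * V * (V * (N * S)) := by simp only [Matrix.mul_assoc]
    have hDherm : (S * Nᵀ * Sw⁻¹ * N * S).IsHermitian := by
      rw [hD, ← Matrix.conjTranspose_eq_transpose_of_trivial]
      exact Matrix.isHermitian_conjTranspose_mul_self A
    have hquad := MTNC.quadform_le_of_lambdaMax hDherm hcon
    have h1 : ∀ x, (A *ᵥ x) ⬝ᵥ (A *ᵥ x) ≤ (1 / r ^ 2) * (x ⬝ᵥ x) := by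
      intro x
      have he : (A *ᵥ x) ⬝ᵥ (A *ᵥ x) = x ⬝ᵥ ((S * Nᵀ * Sw⁻¹ * N * S) *ᵥ x) := by
        rw [MTNC.dp_mulVec_left, Matrix.mulVec_mulVec, ← hD]
      rw [he]
      exact hquad x
    have h2 := MTNC.transfer A (1 / r ^ 2) (by positivity) h1
    have key : ∀ z, z ⬝ᵥ (B *ᵥ z) ≤ (1 / r ^ 2) * (z ⬝ᵥ (Sw *ᵥ z)) := by
      intro z
      have hAy : Aᵀ *ᵥ (V⁻¹ *ᵥ z) = (S * Nᵀ) *ᵥ z := by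
        rw [hAt, Matrix.mulVec_mulVec, Matrix.mul_assoc (S * Nᵀ) V V⁻¹, hVVinv,
          Matrix.mul_one]
      have hL : (Aᵀ *ᵥ (V⁻¹ *ᵥ z)) ⬝ᵥ (Aᵀ *ᵥ (V⁻¹ *ᵥ z)) = z ⬝ᵥ (B *ᵥ z) := by
        rw [hAy, MTNC.dp_mulVec_left, Matrix.mulVec_mulVec, Matrix.transpose_mul,
          Matrix.transpose_transpose, hSt, hNSSN]
      have hR : (V⁻¹ *ᵥ z) ⬝ᵥ (V⁻¹ *ᵥ z) = z ⬝ᵥ (Sw *ᵥ z) := by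
        rw [MTNC.dp_mulVec_left, Matrix.mulVec_mulVec]
        have hVs : (V⁻¹)ᵀ * V⁻¹ = Sw := by
          rw [Matrix.transpose_nonsing_inv, hVt, ← Matrix.mul_inv_rev, hVV,
            Matrix.nonsing_inv_nonsing_inv _ hSwdet]
        rw [hVs]
      have h3 := h2 (V⁻¹ *ᵥ z)
      rw [hL, hR] at h3
      exact h3
    have hpsd : (Sw - r ^ 2 • B).PosSemidef := by
      refine Matrix.PosSemidef.of_dotProduct_mulVec_nonneg ?_ ?_
      · have e1 : Swᵀ = Sw := by
          rw [← Matrix.conjTranspose_eq_transpose_of_trivial]; exact hSw.1.eq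
        have e2 : Bᵀ = B := by
          rw [← Matrix.conjTranspose_eq_transpose_of_trivial]; exact hB.1.eq
        rw [Matrix.IsHermitian, Matrix.conjTranspose_eq_transpose_of_trivial,
          Matrix.transpose_sub, Matrix.transpose_smul, e1, e2]
      · intro z
        rw [star_trivial, Matrix.sub_mulVec, dotProduct_sub, Matrix.smul_mulVec,
          dotProduct_smul, smul_eq_mul]
        have h4 := key z
        have h5 : r ^ 2 * ((1 / r ^ 2) * (z ⬝ᵥ (Sw *ᵥ z))) = z ⬝ᵥ (Sw *ᵥ z) := by
          field_simp
        nlinarith [mul_le_mul_of_nonneg_left h4 hr2.le]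
    refine ⟨hpsd, ?_⟩
    have htr := MTNC.psd_trace_nonneg hpsd
    rw [Matrix.trace_sub] at htr
    linarith
end

section
/- For every integer k ≥ 1 and every x > 0, ∫_0^x p(z; k+1) dz < ∫_0^x p(z; k) dz, where p(·; k) is the χ² density with k degrees of freedom. Consequently, for every fixed γ ∈ (0,1), the threshold c(γ, k) (the unique c > 0 with ∫_0^{c²/2} p(z;k) dz = γ) is strictly increasing in k. (Claim in Section III-C: as the horizon T grows, c(γ, T) grows, so larger noise is required to guarantee Bayesian differential privacy.) -/
open MeasureTheory Matrix Real

section helpers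
variable {k : ℕ}

lemma chi2C_pos (hk : 1 ≤ k) : (0:ℝ) < 2 ^ ((k : ℝ) / 2) * Real.Gamma ((k : ℝ) / 2) := by
  have hs : (0:ℝ) < (k : ℝ) / 2 := by
    have : (1:ℝ) ≤ (k:ℝ) := by exact_mod_cast hk
    linarith
  exact mul_pos (Real.rpow_pos_of_pos two_pos _) (Real.Gamma_pos_of_pos hs)

lemma chi2pdf_eq' (k : ℕ) : chi2pdf k = fun z =>
    (z ^ ((k : ℝ) / 2 - 1) * Real.exp (-(1/2) * z ^ (1:ℝ))) *
      (2 ^ ((k : ℝ) / 2) * Real.Gamma ((k : ℝ) / 2))⁻¹ := by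
  funext z
  rw [chi2pdf, Real.rpow_one, div_eq_mul_inv]
  congr 2
  ring_nf

lemma chi2_integrableOn (hk : 1 ≤ k) : IntegrableOn (chi2pdf k) (Set.Ioi 0) := by
  rw [chi2pdf_eq']
  have hs : (-1:ℝ) < (k:ℝ)/2 - 1 := by
    have : (1:ℝ) ≤ (k:ℝ) := by exact_mod_cast hk
    linarith
  exact (integrableOn_rpow_mul_exp_neg_mul_rpow hs one_pos (by norm_num)).mul_const _

lemma chi2_integral_Ioi (hk : 1 ≤ k) : ∫ z in Set.Ioi (0:ℝ), chi2pdf k z = 1 := by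
  have hs : (-1:ℝ) < (k:ℝ)/2 - 1 := by
    have : (1:ℝ) ≤ (k:ℝ) := by exact_mod_cast hk
    linarith
  have h := integral_rpow_mul_exp_neg_mul_rpow (p := 1) (q := (k:ℝ)/2 - 1) (b := 1/2)
    one_pos hs (by norm_num)
  rw [chi2pdf_eq']
  rw [MeasureTheory.integral_mul_const, h]
  have h2 : ((1:ℝ)/2) ^ (-((k:ℝ)/2 - 1 + 1) / 1) = 2 ^ ((k:ℝ)/2) := by
    rw [show -((k:ℝ)/2 - 1 + 1) / 1 = -((k:ℝ)/2) by ring, one_div,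
      ← Real.rpow_neg_one 2, ← Real.rpow_mul (by norm_num)]
    norm_num
  rw [h2, show ((k:ℝ)/2 - 1 + 1) / 1 = (k:ℝ)/2 by ring]
  field_simp

end helpers

noncomputable def chi2A (k : ℕ) : ℝ := (2 ^ ((k : ℝ) / 2) * Real.Gamma ((k : ℝ) / 2))⁻¹

lemma chi2A_pos {k : ℕ} (hk : 1 ≤ k) : 0 < chi2A k := inv_pos.mpr (chi2C_pos hk)

lemma chi2pdf_nonneg {k : ℕ} (hk : 1 ≤ k) {z : ℝ} (hz : 0 ≤ z) : 0 ≤ chi2pdf k z :=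
  div_nonneg (mul_nonneg (Real.rpow_nonneg hz _) (Real.exp_pos _).le) (chi2C_pos hk).le

lemma chi2_diff (k : ℕ) {z : ℝ} (hz : 0 < z) :
    chi2pdf k z - chi2pdf (k + 1) z =
      z ^ ((k : ℝ) / 2 - 1) * Real.exp (-z / 2) *
        (chi2A k - Real.sqrt z * chi2A (k + 1)) := by
  have h1 : ((k + 1 : ℕ) : ℝ) / 2 - 1 = ((k : ℝ) / 2 - 1) + 1 / 2 := by push_cast; ring
  rw [chi2pdf, chi2pdf, h1, Real.rpow_add hz, Real.sqrt_eq_rpow, chi2A, chi2A,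
    div_eq_mul_inv, div_eq_mul_inv]
  ring


/-- **Monotonicity in the degrees of freedom.** For every `k ≥ 1` and `x > 0`,
`∫_0^x p(z; k+1) dz < ∫_0^x p(z; k) dz`; consequently, for fixed `γ ∈ (0,1)` the
threshold `c(γ, k)` is strictly increasing in `k`. -/
theorem chi_squared_cdf_strict_anti_in_dof
    (k : ℕ) (hk : 1 ≤ k) :
    (∀ x : ℝ, 0 < x →
        (∫ z in (0:ℝ)..x, chi2pdf (k + 1) z) < ∫ z in (0:ℝ)..x, chi2pdf k z) ∧
    (∀ γ : ℝ, 0 < γ → γ < 1 →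
      ∀ c₁ c₂ : ℝ, 0 < c₁ → 0 < c₂ →
        (∫ z in (0:ℝ)..(c₁ ^ 2 / 2), chi2pdf k z) = γ →
        (∫ z in (0:ℝ)..(c₂ ^ 2 / 2), chi2pdf (k + 1) z) = γ →
        c₁ < c₂) := by
  have hk1 : 1 ≤ k + 1 := by omega
  have hIk : IntegrableOn (chi2pdf k) (Set.Ioi 0) := chi2_integrableOn hk
  have hIk1 : IntegrableOn (chi2pdf (k + 1)) (Set.Ioi 0) := chi2_integrableOn hk1
  have hAk := chi2A_pos hk
  have hAk1 := chi2A_pos hk1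
  set r : ℝ := chi2A k / chi2A (k + 1) with hr
  have hrpos : 0 < r := div_pos hAk hAk1
  set z₀ : ℝ := r ^ 2 with hz0
  have hz0pos : 0 < z₀ := by positivity
  have hgpos : ∀ z : ℝ, 0 < z → z < z₀ → 0 < chi2pdf k z - chi2pdf (k + 1) z := by
    intro z hz hzlt
    rw [chi2_diff k hz]
    have hs : Real.sqrt z < r := (Real.sqrt_lt' hrpos).mpr hzlt
    have h2 : Real.sqrt z * chi2A (k + 1) < chi2A k := (lt_div_iff₀ hAk1).mp hs
    exact mul_pos (mul_pos (Real.rpow_pos_of_pos hz _) (Real.exp_pos _)) (by linarith)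
  have hgneg : ∀ z : ℝ, z₀ < z → chi2pdf k z - chi2pdf (k + 1) z < 0 := by
    intro z hzlt
    have hz : 0 < z := lt_trans hz0pos hzlt
    rw [chi2_diff k hz]
    have hs : r < Real.sqrt z := (Real.lt_sqrt hrpos.le).mpr hzlt
    have h2 : chi2A k < Real.sqrt z * chi2A (k + 1) := (div_lt_iff₀ hAk1).mp hs
    exact mul_neg_of_pos_of_neg
      (mul_pos (Real.rpow_pos_of_pos hz _) (Real.exp_pos _)) (by linarith)
  have hint : ∀ (m : ℕ), 1 ≤ m → ∀ a b : ℝ, 0 ≤ a → 0 ≤ b →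
      IntervalIntegrable (chi2pdf m) volume a b := by
    intro m hm a b ha hb
    rw [intervalIntegrable_iff]
    refine (chi2_integrableOn hm).mono_set fun z hz => ?_
    exact lt_of_le_of_lt (le_min ha hb) hz.1
  have part1 : ∀ x : ℝ, 0 < x →
      (∫ z in (0:ℝ)..x, chi2pdf (k + 1) z) < ∫ z in (0:ℝ)..x, chi2pdf k z := by
    intro x hx
    rw [← sub_pos, ← intervalIntegral.integral_sub (hint k hk 0 x le_rfl hx.le)
      (hint (k + 1) hk1 0 x le_rfl hx.le)]
    rcases le_or_gt x z₀ with hle | hlt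
    · refine intervalIntegral.intervalIntegral_pos_of_pos_on
        ((hint k hk 0 x le_rfl hx.le).sub (hint (k + 1) hk1 0 x le_rfl hx.le)) ?_ hx
      intro z hz
      exact hgpos z hz.1 (lt_of_lt_of_le hz.2 hle)
    · rw [intervalIntegral.integral_of_le hx.le]
      have hmeas : MeasurableSet (Set.Ioi x) := measurableSet_Ioi
      have hIocK : IntegrableOn (chi2pdf k) (Set.Ioc 0 x) :=
        hIk.mono_set Set.Ioc_subset_Ioi_self
      have hIocK1 : IntegrableOn (chi2pdf (k + 1)) (Set.Ioc 0 x) :=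
        hIk1.mono_set Set.Ioc_subset_Ioi_self
      have hIoiK : IntegrableOn (chi2pdf k) (Set.Ioi x) :=
        hIk.mono_set (Set.Ioi_subset_Ioi hx.le)
      have hIoiK1 : IntegrableOn (chi2pdf (k + 1)) (Set.Ioi x) :=
        hIk1.mono_set (Set.Ioi_subset_Ioi hx.le)
      have hsplit :
          (∫ z in Set.Ioc 0 x, (chi2pdf k z - chi2pdf (k + 1) z)) +
            ∫ z in Set.Ioi x, (chi2pdf k z - chi2pdf (k + 1) z) =
          ∫ z in Set.Ioi 0, (chi2pdf k z - chi2pdf (k + 1) z) := by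
        rw [← MeasureTheory.setIntegral_union (Set.Ioc_disjoint_Ioi le_rfl) hmeas
          (show IntegrableOn (fun z => chi2pdf k z - chi2pdf (k + 1) z) (Set.Ioc 0 x) volume
            from hIocK.sub hIocK1)
          (show IntegrableOn (fun z => chi2pdf k z - chi2pdf (k + 1) z) (Set.Ioi x) volume
            from hIoiK.sub hIoiK1), Set.Ioc_union_Ioi_eq_Ioi hx.le]
      have htot : ∫ z in Set.Ioi 0, (chi2pdf k z - chi2pdf (k + 1) z) = 0 := by
        rw [MeasureTheory.integral_sub hIk hIk1, chi2_integral_Ioi hk,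
          chi2_integral_Ioi hk1, sub_self]
      have hneg : ∫ z in Set.Ioi x, (chi2pdf k z - chi2pdf (k + 1) z) < 0 := by
        rw [← neg_pos, ← MeasureTheory.integral_neg]
        have : (0:ℝ) < ∫ z in Set.Ioi x, (chi2pdf (k + 1) z - chi2pdf k z) := by
          rw [MeasureTheory.setIntegral_pos_iff_support_of_nonneg_ae ?_
            (show IntegrableOn (fun z => chi2pdf (k + 1) z - chi2pdf k z) (Set.Ioi x) volume
              from hIoiK1.sub hIoiK)]
          · refine lt_of_lt_of_le ?_ (measure_mono (s := Set.Ioi x) fun z hz => ?_)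
            · simp [Real.volume_Ioi]
            · refine ⟨?_, hz⟩
              have := hgneg z (lt_trans hlt hz)
              simp only [Function.mem_support]
              intro h0
              rw [sub_eq_zero] at h0
              rw [h0, sub_self] at this
              exact lt_irrefl 0 this
          · filter_upwards [ae_restrict_mem hmeas] with z hz
            have := hgneg z (lt_trans hlt hz)
            simp only [Pi.zero_apply]
            linarith
        calc (0:ℝ) < _ := this
          _ = ∫ z in Set.Ioi x, -(chi2pdf k z - chi2pdf (k + 1) z) := by
            congr 1; funext z; ring
      linarith
  refine ⟨part1, ?_⟩
  intro γ hγ0 hγ1 c₁ c₂ hc₁ hc₂ h1 h2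
  by_contra hcon
  push_neg at hcon
  have ha : (0:ℝ) < c₁ ^ 2 / 2 := by positivity
  have hb : (0:ℝ) < c₂ ^ 2 / 2 := by positivity
  have hba : c₂ ^ 2 / 2 ≤ c₁ ^ 2 / 2 := by nlinarith
  have hlt : (∫ z in (0:ℝ)..(c₁ ^ 2 / 2), chi2pdf (k + 1) z) < γ := by
    rw [← h1]; exact part1 _ ha
  have hmono : (∫ z in (0:ℝ)..(c₂ ^ 2 / 2), chi2pdf (k + 1) z) ≤
      ∫ z in (0:ℝ)..(c₁ ^ 2 / 2), chi2pdf (k + 1) z := by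
    rw [← intervalIntegral.integral_add_adjacent_intervals
      (hint (k + 1) hk1 0 (c₂ ^ 2 / 2) le_rfl hb.le)
      (hint (k + 1) hk1 (c₂ ^ 2 / 2) (c₁ ^ 2 / 2) hb.le ha.le)]
    have : (0:ℝ) ≤ ∫ z in (c₂ ^ 2 / 2)..(c₁ ^ 2 / 2), chi2pdf (k + 1) z :=
      intervalIntegral.integral_nonneg hba fun u hu =>
        chi2pdf_nonneg hk1 (le_trans hb.le hu.1)
    linarith
  rw [h2] at hmono
  linarith
end
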